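/- Let Z ⊆ 2^ω be a nowhere meager subset of the Cantor space (i.e., Z ∩ U is non-meager in 2^ω for every non-empty open U ⊆ 2^ω). Then Z is dense in 2^ω and Z is a Baire space, and consequently Z^ω is a Baire space. -/

import Mathlib

open Set Topology

namespace NMCB

abbrev Cs := ℕ → Bool
abbrev Cc := ℕ → Cs

/-- `s` is a prefix of the sequence `y`. -/
def PF (s : List Bool) (y : ℕ → Bool) : Prop :=
  ∀ i : ℕ, ∀ h : i < s.length, y i = s.get ⟨i, h⟩

def cyl (s : List Bool) : Set Cs := {y | PF s y}

def Box (σ : ℕ → List Bool) : Set Cc := {w | ∀ j, PF (σ j) (w j)}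

def BoxL (l : List (List Bool)) : Set Cc := Box (fun j => l.getD j [])

lemma PF_nil (y : Cs) : PF [] y := fun i h => by simp at h

lemma PF_mono {s t : List Bool} (hst : s <+: t) {y : Cs} (h : PF t y) : PF s y := by
  intro i hi
  have hlen : i < t.length := lt_of_lt_of_le hi hst.length_le
  rw [h i hlen]
  obtain ⟨u, rfl⟩ := hst
  simp only [List.get_eq_getElem]
  exact List.getElem_append_left hi

lemma PF_ofFn (y : Cs) (m : ℕ) : PF (List.ofFn (fun i : Fin m => y i)) y := by
  intro i hi
  simp at hi ⊢

lemma prefix_ofFn {s : List Bool} {y : Cs} (h : PF s y) {m : ℕ} (hm : s.length ≤ m) :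
    s <+: List.ofFn (fun i : Fin m => y i) := by
  apply List.prefix_iff_eq_take.2
  apply List.ext_getElem
  · simp [hm]
  · intro i h1 h2
    simp only [List.getElem_take, List.getElem_ofFn]
    exact (h i h1).symm




lemma isOpen_cyl (s : List Bool) : IsOpen (cyl s) := by
  have : cyl s = ⋂ i : Fin s.length, (fun y : Cs => y i) ⁻¹' {s.get i} := by
    ext y
    simp only [cyl, PF, mem_setOf_eq, mem_iInter, mem_preimage, mem_singleton_iff]
    exact ⟨fun h i => h i i.2, fun h i hi => h ⟨i, hi⟩⟩
  rw [this]
  exact isOpen_iInter_of_finite fun i =>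
    (isOpen_discrete _).preimage (continuous_apply (i : ℕ))

lemma isClosed_cyl (s : List Bool) : IsClosed (cyl s) := by
  have : cyl s = ⋂ i : Fin s.length, (fun y : Cs => y i) ⁻¹' {s.get i} := by
    ext y
    simp only [cyl, PF, mem_setOf_eq, mem_iInter, mem_preimage, mem_singleton_iff]
    exact ⟨fun h i => h i i.2, fun h i hi => h ⟨i, hi⟩⟩
  rw [this]
  exact isClosed_iInter fun i =>
    (isClosed_discrete _).preimage (continuous_apply (i : ℕ))

lemma cyl_nonempty (s : List Bool) : (cyl s).Nonempty := by
  refine ⟨fun i => s.getD i false, fun i hi => ?_⟩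
  simp [List.getD_eq_getElem s false hi, List.getElem?_eq_getElem hi]

lemma boxL_nonempty (l : List (List Bool)) : (BoxL l).Nonempty := by
  refine ⟨fun j i => (l.getD j []).getD i false, fun j i hi => ?_⟩
  dsimp only at hi ⊢
  rw [List.getD_eq_getElem _ false hi]
  simp

lemma isOpen_boxL (l : List (List Bool)) : IsOpen (BoxL l) := by
  have : BoxL l = ⋂ j : Fin l.length, (fun w : Cc => w j) ⁻¹' cyl (l.getD j []) := by
    ext w
    simp only [BoxL, Box, mem_setOf_eq, mem_iInter, mem_preimage]
    constructor
    · exact fun h j => h j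
    · intro h j
      by_cases hj : j < l.length
      · exact h ⟨j, hj⟩
      · rw [List.getD_eq_default _ _ (le_of_not_gt hj)]
        exact PF_nil _
  rw [this]
  exact isOpen_iInter_of_finite fun j => (isOpen_cyl _).preimage (continuous_apply (j : ℕ))

/-- Cylinders form a base of `Cs`. -/
lemma exists_cyl_subset {u : Set Cs} (hu : IsOpen u) {y : Cs} (hy : y ∈ u) :
    ∃ m : ℕ, cyl (List.ofFn (fun i : Fin m => y i)) ⊆ u := by
  rcases isOpen_pi_iff.1 hu y hy with ⟨I, v, hv, hsub⟩
  rcases I.bddAbove with ⟨m, hm⟩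
  refine ⟨m + 1, fun z hz => hsub ?_⟩
  intro i hi
  have him : i < m + 1 := Nat.lt_succ_of_le (hm hi)
  have := hz i (by simpa using him)
  simp only [List.get_eq_getElem, List.getElem_ofFn] at this
  rw [this]
  exact (hv i hi).2

/-- Finite boxes form a base of `Cc`. -/
lemma exists_boxL_subset {O : Set Cc} (hO : IsOpen O) {w : Cc} (hw : w ∈ O) :
    ∃ l : List (List Bool), w ∈ BoxL l ∧ BoxL l ⊆ O := by
  rcases isOpen_pi_iff.1 hO w hw with ⟨I, v, hv, hsub⟩
  have hch : ∀ j ∈ I, ∃ m : ℕ, cyl (List.ofFn (fun i : Fin m => w j i)) ⊆ v j :=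
    fun j hj => exists_cyl_subset (hv j hj).1 (hv j hj).2
  choose! mf hmf using hch
  rcases I.bddAbove with ⟨N, hN⟩
  classical
  refine ⟨List.ofFn (fun j : Fin (N + 1) =>
      if h : (j : ℕ) ∈ I then List.ofFn (fun i : Fin (mf j) => w j i) else []), ?_, ?_⟩
  · intro j
    try dsimp only
    by_cases hj : j < N + 1
    · rw [List.getD_eq_getElem _ _ (by simpa using hj)]
      simp only [List.getElem_ofFn]
      by_cases hjI : j ∈ I
      · simp only [hjI, dif_pos]
        intro i hi
        simp
      · simp only [hjI, dif_neg, not_false_iff]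
        exact PF_nil _
    · rw [List.getD_eq_default _ _ (by simpa using le_of_not_gt hj)]
      exact PF_nil _
  · intro z hz
    apply hsub
    intro j hj
    have hjN : j < N + 1 := Nat.lt_succ_of_le (hN hj)
    apply hmf j hj
    have := hz j
    dsimp only [BoxL, Box, mem_setOf_eq] at this
    rw [List.getD_eq_getElem _ _ (by simpa using hjN)] at this
    simp only [List.getElem_ofFn] at this
    rw [dif_pos (by exact_mod_cast hj)] at this
    exact this


/-! ### Splitting off the first coordinate -/

def cons2 (y : Cs) (w : Cc) : Cc := fun k => Nat.casesOn k y (fun k' => w k')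

@[simp] lemma cons2_zero (y : Cs) (w : Cc) : cons2 y w 0 = y := rfl
@[simp] lemma cons2_succ (y : Cs) (w : Cc) (k : ℕ) : cons2 y w (k + 1) = w k := rfl

lemma continuous_cons2_right (y : Cs) : Continuous (fun w => cons2 y w) := by
  apply continuous_pi
  intro k
  cases k with
  | zero => exact continuous_const
  | succ k' => exact continuous_apply k'

lemma continuous_cons2 : Continuous (fun p : Cs × Cc => cons2 p.1 p.2) := by
  apply continuous_pi
  intro k
  cases k with
  | zero => exact continuous_fst
  | succ k' => exact (continuous_apply k').comp continuous_snd

/-- The section of `T ⊆ Cc` at first coordinate `y`. -/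
def sec (y : Cs) (T : Set Cc) : Set Cc := (fun w => cons2 y w) ⁻¹' T

lemma isClosed_sec {T : Set Cc} (hT : IsClosed T) (y : Cs) : IsClosed (sec y T) :=
  hT.preimage (continuous_cons2_right y)

lemma mem_box_cons2 {σ : ℕ → List Bool} {y : Cs} {w : Cc} :
    cons2 y w ∈ Box σ ↔ PF (σ 0) y ∧ w ∈ Box (fun j => σ (j + 1)) := by
  constructor
  · intro h
    exact ⟨h 0, fun j => h (j + 1)⟩
  · rintro ⟨h0, hs⟩ j
    cases j with
    | zero => exact h0
    | succ j' => exact hs j'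

lemma getD_ofFn {α : Type*} {N : ℕ} (f : Fin N → α) (d : α) (j : ℕ) :
    (List.ofFn f).getD j d = if h : j < N then f ⟨j, h⟩ else d := by
  split_ifs with h
  · rw [List.getD_eq_getElem _ _ (by simpa using h)]; simp
  · rw [List.getD_eq_default _ _ (by simpa using le_of_not_gt h)]

/-- Merging two boxes containing a common point. -/
lemma merge_boxes {l₁ l₂ : List (List Bool)} {w : Cc}
    (h₁ : w ∈ BoxL l₁) (h₂ : w ∈ BoxL l₂) :
    ∃ l : List (List Bool), w ∈ BoxL l ∧
      (∀ j, l₁.getD j [] <+: l.getD j []) ∧ (∀ j, l₂.getD j [] <+: l.getD j []) := by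
  set N := max l₁.length l₂.length with hN
  refine ⟨List.ofFn (fun j : Fin N =>
      List.ofFn (fun i : Fin (max (l₁.getD j []).length (l₂.getD j []).length) => w j i)),
    ?_, ?_, ?_⟩
  · intro j
    dsimp only [BoxL, Box, mem_setOf_eq]
    rw [getD_ofFn]
    split_ifs with hj
    · intro i hi; simp
    · exact PF_nil _
  · intro j
    rw [getD_ofFn]
    split_ifs with hj
    · exact prefix_ofFn (h₁ j) (le_max_left _ _)
    · rw [List.getD_eq_default _ _ (le_trans (le_max_left _ _) (le_of_not_gt hj))]
  · intro j
    rw [getD_ofFn]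
    split_ifs with hj
    · exact prefix_ofFn (h₂ j) (le_max_right _ _)
    · rw [List.getD_eq_default _ _ (le_trans (le_max_right _ _) (le_of_not_gt hj))]

lemma boxL_mono {l₁ l₂ : List (List Bool)} (h : ∀ j, l₁.getD j [] <+: l₂.getD j []) :
    BoxL l₂ ⊆ BoxL l₁ :=
  fun _ hw j => PF_mono (h j) (hw j)


lemma continuous_cons2_left (w : Cc) : Continuous (fun y => cons2 y w) := by
  apply continuous_pi
  intro k
  cases k with
  | zero => exact continuous_id
  | succ k' => exact continuous_const

lemma cons2_eta (v : Cc) : cons2 (v 0) (fun k => v (k + 1)) = v := by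
  funext k
  cases k <;> rfl

/-- Kuratowski–Ulam (easy half, for closed sets): if `T` is closed and nowhere
dense, then the set of `y` with non-nowhere-dense section is meagre. -/
lemma bad_sections_meagre {T : Set Cc} (hc : IsClosed T) (hnwd : IsNowhereDense T) :
    IsMeagre {y : Cs | ¬ IsNowhereDense (sec y T)} := by
  classical
  set A : List (List Bool) → Set Cs := fun l => {y | BoxL l ⊆ sec y T} with hA
  have hAclosed : ∀ l, IsClosed (A l) := by
    intro l
    have : A l = ⋂ w ∈ BoxL l, (fun y => cons2 y w) ⁻¹' T := by
      ext y; simp [hA, subset_def, sec]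
    rw [this]
    exact isClosed_biInter fun w _ => hc.preimage (continuous_cons2_left w)
  have hAnwd : ∀ l, IsNowhereDense (A l) := by
    intro l
    rw [(hAclosed l).isNowhereDense_iff]
    by_contra hne
    rcases nonempty_iff_ne_empty.2 hne with ⟨y, hy⟩
    rcases exists_cyl_subset isOpen_interior hy with ⟨m, hm⟩
    set s := List.ofFn (fun i : Fin m => y i) with hs
    have hss : cyl s ⊆ A l := hm.trans interior_subset
    have hbox : BoxL (s :: l) ⊆ T := by
      intro v hv
      have h0 : v 0 ∈ cyl s := hv 0
      have htail : (fun k => v (k + 1)) ∈ BoxL l := fun j => hv (j + 1)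
      have := hss h0 htail
      rwa [sec, mem_preimage, cons2_eta] at this
    have : interior T ≠ ∅ := by
      rcases boxL_nonempty (s :: l) with ⟨v, hv⟩
      exact nonempty_iff_ne_empty.1 ⟨v, (isOpen_boxL (s :: l)).subset_interior_iff.2 hbox hv⟩
    exact this (hc.isNowhereDense_iff.1 hnwd)
  have hcover : {y : Cs | ¬ IsNowhereDense (sec y T)} ⊆ ⋃ l : List (List Bool), A l := by
    intro y hy
    have hclosed : IsClosed (sec y T) := isClosed_sec hc y
    have : interior (sec y T) ≠ ∅ := fun h => hy (hclosed.isNowhereDense_iff.2 h)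
    rcases nonempty_iff_ne_empty.2 this with ⟨w, hw⟩
    rcases exists_boxL_subset isOpen_interior hw with ⟨l, _, hl⟩
    exact mem_iUnion.2 ⟨l, hl.trans interior_subset⟩
  refine IsMeagre.mono hcover ?_
  rw [isMeagre_iff_countable_union_isNowhereDense]
  refine ⟨range A, ?_, countable_range A, ?_⟩
  · rintro t ⟨l, rfl⟩; exact hAnwd l
  · rw [sUnion_range]


lemma getD_tail {α : Type*} (l : List α) (j : ℕ) (d : α) :
    l.tail.getD j d = l.getD (j + 1) d := by
  cases l <;> simp [List.getD]

section Step

variable {Z : Set Cs} (hZ : ∀ U : Set Cs, IsOpen U → U.Nonempty → ¬ IsMeagre (Z ∩ U))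

include hZ in
lemma exists_mem_inter_cyl (s : List Bool) {M : Set Cs} (hM : IsMeagre M) :
    ∃ z, z ∈ Z ∧ PF s z ∧ z ∉ M := by
  by_contra hcon
  push_neg at hcon
  have hsub : Z ∩ cyl s ⊆ M := by
    rintro z ⟨hz, hzc⟩
    exact hcon z hz hzc
  exact hZ (cyl s) (isOpen_cyl s) (cyl_nonempty s) (hM.mono hsub)

include hZ in
lemma step_ex (l : List (List Bool)) (G : ℕ → Set Cc) (n : ℕ) :
    ∃ z : Cs, ∃ l' : List (List Bool),
      z ∈ Z ∧ PF (l'.getD 0 []) z ∧ (∀ j, l.getD j [] <+: l'.getD j []) ∧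
      ((∀ m, IsClosed (G m) ∧ IsNowhereDense (G m)) →
        (Disjoint (BoxL l') (G n) ∧ ∀ m, IsNowhereDense (sec z (G m)))) := by
  by_cases hG : ∀ m, IsClosed (G m) ∧ IsNowhereDense (G m)
  · -- shrink the box away from `G n`
    have hO : IsOpen (BoxL l \ G n) := (isOpen_boxL l).sdiff (hG n).1
    have hOne : (BoxL l \ G n).Nonempty := by
      rw [diff_nonempty]
      intro hsub
      have : BoxL l ⊆ interior (G n) :=
        (isOpen_boxL l).subset_interior_iff.2 hsub
      rcases boxL_nonempty l with ⟨w, hw⟩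
      have h2 := (hG n).1.isNowhereDense_iff.1 (hG n).2
      rw [h2] at this
      exact this hw
    rcases hOne with ⟨w, hw⟩
    rcases exists_boxL_subset hO hw with ⟨l₁, hwl₁, hl₁⟩
    rcases merge_boxes hwl₁ ((hl₁ hwl₁).1) with ⟨l', hwl', hr₁, hr⟩
    have hl'sub : BoxL l' ⊆ BoxL l \ G n := (boxL_mono hr₁).trans hl₁
    -- pick a good point of Z in the first-coordinate cylinder
    set M : Set Cs := ⋃ m, {y : Cs | ¬ IsNowhereDense (sec y (G m))} with hM
    have hMme : IsMeagre M :=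
      isMeagre_iUnion fun m => bad_sections_meagre (hG m).1 (hG m).2
    rcases exists_mem_inter_cyl hZ (l'.getD 0 []) hMme with ⟨z, hzZ, hzc, hzM⟩
    refine ⟨z, l', hzZ, hzc, hr, fun _ => ⟨?_, ?_⟩⟩
    · exact Set.disjoint_left.2 fun v hv => (hl'sub hv).2
    · intro m
      by_contra hbad
      exact hzM (mem_iUnion.2 ⟨m, hbad⟩)
  · rcases exists_mem_inter_cyl hZ (l.getD 0 []) IsMeagre.empty with ⟨z, hzZ, hzc, _⟩
    exact ⟨z, l, hzZ, hzc, fun j => List.prefix_refl _, fun h => absurd h hG⟩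

end Step


theorem prod_nowhereMeagre {Z : Set Cs}
    (hZ : ∀ U : Set Cs, IsOpen U → U.Nonempty → ¬ IsMeagre (Z ∩ U))
    (U : Set Cc) (hU : IsOpen U) (hne : U.Nonempty) :
    ¬ IsMeagre ({x : Cc | ∀ n, x n ∈ Z} ∩ U) := by
  intro hme
  classical
  rw [isMeagre_iff_countable_union_isNowhereDense] at hme
  obtain ⟨𝒮, h𝒮nwd, h𝒮cnt, h𝒮cov⟩ := hme
  -- a sequence of closed nowhere dense sets covering the meagre set
  obtain ⟨f, hf⟩ := (h𝒮cnt.insert ∅).exists_eq_range (insert_nonempty _ _)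
  set F : ℕ → Set Cc := fun m => closure (f m) with hF
  have hFc : ∀ m, IsClosed (F m) := fun m => isClosed_closure
  have hFnwd : ∀ m, IsNowhereDense (F m) := by
    intro m
    have : f m ∈ insert ∅ 𝒮 := hf ▸ mem_range_self m
    rcases this with h | h
    · show IsNowhereDense (closure (f m))
      rw [h, closure_empty]
      exact isNowhereDense_empty
    · exact (h𝒮nwd _ h).closure
  have hFcov : ⋃₀ 𝒮 ⊆ ⋃ m, F m := by
    intro x hx
    rcases hx with ⟨t, ht, hxt⟩
    have : t ∈ insert ∅ 𝒮 := mem_insert_of_mem _ ht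
    rw [hf] at this
    rcases this with ⟨m, rfl⟩
    exact mem_iUnion.2 ⟨m, subset_closure hxt⟩
  -- initial box inside U
  rcases hne with ⟨w0, hw0⟩
  rcases exists_boxL_subset hU hw0 with ⟨l0, _, hl0⟩
  -- the recursion
  obtain ⟨zf, lf, hzZ, hzpf, href, hcond⟩ :
      ∃ zf : List (List Bool) → (ℕ → Set Cc) → ℕ → Cs,
      ∃ lf : List (List Bool) → (ℕ → Set Cc) → ℕ → List (List Bool),
      (∀ l G n, zf l G n ∈ Z) ∧
      (∀ l G n, PF ((lf l G n).getD 0 []) (zf l G n)) ∧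
      (∀ l G n, ∀ j, l.getD j [] <+: (lf l G n).getD j []) ∧
      (∀ l G n, (∀ m, IsClosed (G m) ∧ IsNowhereDense (G m)) →
        (Disjoint (BoxL (lf l G n)) (G n) ∧
          ∀ m, IsNowhereDense (sec (zf l G n) (G m)))) := by
    choose zf lf h1 h2 h3 h4 using step_ex hZ
    exact ⟨zf, lf, h1, h2, h3, h4⟩
  set st : ℕ → List (List Bool) × (ℕ → Set Cc) := fun n =>
    Nat.rec (l0, F)
      (fun n p => ((lf p.1 p.2 n).tail, fun m => sec (zf p.1 p.2 n) (p.2 m))) n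
    with hst
  have st_zero : st 0 = (l0, F) := rfl
  have st_succ : ∀ n, st (n + 1) =
      ((lf (st n).1 (st n).2 n).tail,
        fun m => sec (zf (st n).1 (st n).2 n) ((st n).2 m)) := fun n => rfl
  set z : ℕ → Cs := fun n => zf (st n).1 (st n).2 n with hz
  set l' : ℕ → List (List Bool) := fun n => lf (st n).1 (st n).2 n with hl'
  -- invariant: the sets are closed and nowhere dense
  have inv : ∀ n, ∀ m, IsClosed ((st n).2 m) ∧ IsNowhereDense ((st n).2 m) := by
    intro n
    induction n with
    | zero => exact fun m => ⟨hFc m, hFnwd m⟩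
    | succ n ih =>
      intro m
      rw [st_succ n]
      exact ⟨isClosed_sec (ih m).1 _, (hcond (st n).1 (st n).2 n ih).2 m⟩
  have hdisj : ∀ n, Disjoint (BoxL (l' n)) ((st n).2 n) :=
    fun n => (hcond (st n).1 (st n).2 n (inv n)).1
  have st1_succ : ∀ n, (st (n + 1)).1 = (l' n).tail := fun n => by rw [st_succ n]
  have st2_succ : ∀ n m, (st (n + 1)).2 m = sec (z n) ((st n).2 m) := fun n m => by
    rw [st_succ n]
  -- the prefix chain
  have chain : ∀ j n, (l' n).getD j [] <+: (l' (n + j)).getD 0 [] := by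
    intro j
    induction j with
    | zero => exact fun n => List.prefix_refl _
    | succ j ih =>
      intro n
      have h1 : (l' n).getD (j + 1) [] <+: (l' (n + 1)).getD j [] := by
        have := href (st (n + 1)).1 (st (n + 1)).2 (n + 1) j
        rwa [st1_succ n, getD_tail] at this
      have h2 := ih (n + 1)
      rw [show n + 1 + j = n + (j + 1) by omega] at h2
      exact h1.trans h2
  set tl : ℕ → Cc := fun n j => z (n + j) with htl
  have pf_z : ∀ n, PF ((l' n).getD 0 []) (z n) := fun n => hzpf (st n).1 (st n).2 n
  have mem_box' : ∀ n, tl n ∈ BoxL (l' n) := by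
    intro n j
    exact PF_mono (chain j n) (pf_z (n + j))
  have cons_tl : ∀ n, cons2 (z n) (tl (n + 1)) = tl n := by
    intro n
    funext k
    cases k with
    | zero => rfl
    | succ k =>
      show z (n + 1 + k) = z (n + (k + 1))
      have e : n + 1 + k = n + (k + 1) := by omega
      exact congrArg z e
  -- the diagonal point
  have hxS : tl 0 ∈ {x : Cc | ∀ n, x n ∈ Z} := fun k => hzZ _ _ _
  have hxU : tl 0 ∈ U := hl0 (boxL_mono (href (st 0).1 (st 0).2 0) (mem_box' 0))
  have hxF : ∀ m, tl 0 ∉ F m := by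
    intro m hxm
    have key : ∀ n, tl n ∈ (st n).2 m := by
      intro n
      induction n with
      | zero => exact hxm
      | succ n ih =>
        rw [st2_succ n m, sec, mem_preimage, cons_tl n]
        exact ih
    exact Set.disjoint_left.1 (hdisj m) (mem_box' m) (key m)
  rcases mem_iUnion.1 (hFcov (h𝒮cov ⟨hxS, hxU⟩)) with ⟨m, hm⟩
  exact hxF m hm


/-! ### A subset that is nowhere meagre is a Baire space -/

theorem dense_of_nowhereMeagre {X : Type*} [TopologicalSpace X] {Y : Set X}
    (h : ∀ U : Set X, IsOpen U → U.Nonempty → ¬ IsMeagre (Y ∩ U)) : Dense Y := by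
  rw [dense_iff_inter_open]
  intro U hU hUne
  by_contra hcon
  rw [not_nonempty_iff_eq_empty] at hcon
  rw [inter_comm] at hcon
  exact h U hU hUne (hcon ▸ IsMeagre.empty)

theorem baire_of_nowhereMeagre {X : Type*} [TopologicalSpace X] {Y : Set X}
    (h : ∀ U : Set X, IsOpen U → U.Nonempty → ¬ IsMeagre (Y ∩ U)) :
    BaireSpace Y := by
  constructor
  intro f hop hdn
  rw [dense_iff_inter_open]
  rintro V hV hVne
  by_contra hcon
  rw [not_nonempty_iff_eq_empty] at hcon
  rcases isOpen_induced_iff.1 hV with ⟨U, hUo, rfl⟩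
  have hfn : ∀ n, ∃ W, IsOpen W ∧ Subtype.val ⁻¹' W = f n :=
    fun n => isOpen_induced_iff.1 (hop n)
  choose Wn hWo hWe using hfn
  -- each `Y ∩ (Wn n)ᶜ` is nowhere dense in `X`
  have hnwd : ∀ n, IsNowhereDense (Y ∩ (Wn n)ᶜ) := by
    intro n
    rw [IsNowhereDense]
    by_contra hne
    rcases nonempty_iff_ne_empty.2 hne with ⟨p, hp⟩
    set O : Set X := interior (closure (Y ∩ (Wn n)ᶜ)) with hO
    have hOo : IsOpen O := isOpen_interior
    have hOne : O.Nonempty := ⟨p, hp⟩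
    -- `Y ∩ O` is nonempty
    have hYO : (Y ∩ O).Nonempty := by
      by_contra hYO
      rw [not_nonempty_iff_eq_empty] at hYO
      exact h O hOo hOne (hYO ▸ IsMeagre.empty)
    rcases hYO with ⟨y, hyY, hyO⟩
    -- density of `f n` in `Y`: find a point of `Y ∩ O ∩ Wn n`
    have : ((Subtype.val ⁻¹' O : Set Y) ∩ f n).Nonempty :=
      dense_iff_inter_open.1 (hdn n) _ (hOo.preimage continuous_subtype_val)
        ⟨⟨y, hyY⟩, hyO⟩
    rcases this with ⟨q, hqO, hqf⟩
    have hqW : (q : X) ∈ Wn n := by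
      rw [← hWe n] at hqf
      exact hqf
    -- `O ∩ Wn n` is an open neighbourhood of `q` meeting `Y ∩ (Wn n)ᶜ`
    have hqcl : (q : X) ∈ closure (Y ∩ (Wn n)ᶜ) := interior_subset hqO
    have := (mem_closure_iff).1 hqcl (O ∩ Wn n) (hOo.inter (hWo n)) ⟨hqO, hqW⟩
    rcases this with ⟨r, ⟨_, hrW⟩, _, hrW'⟩
    exact hrW' hrW
  -- `Y ∩ U` is covered by the nowhere dense sets
  have hcov : Y ∩ U ⊆ ⋃ n, Y ∩ (Wn n)ᶜ := by
    rintro x ⟨hxY, hxU⟩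
    have hx : (⟨x, hxY⟩ : Y) ∉ ⋂ n, f n := by
      intro hmem
      have : (⟨x, hxY⟩ : Y) ∈ (Subtype.val ⁻¹' U : Set Y) ∩ ⋂ n, f n := ⟨hxU, hmem⟩
      rw [hcon] at this
      exact this
    rw [mem_iInter] at hx
    push_neg at hx
    rcases hx with ⟨n, hn⟩
    refine mem_iUnion.2 ⟨n, hxY, fun hxW => hn ?_⟩
    rw [← hWe n]
    exact hxW
  -- hence `Y ∩ U` is meagre, contradiction
  have hUne : U.Nonempty := by
    rcases hVne with ⟨v, hv⟩
    exact ⟨(v : X), hv⟩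
  refine h U hUo hUne ?_
  refine IsMeagre.mono hcov ?_
  rw [isMeagre_iff_countable_union_isNowhereDense]
  refine ⟨range (fun n => Y ∩ (Wn n)ᶜ), ?_, countable_range _, ?_⟩
  · rintro t ⟨n, rfl⟩; exact hnwd n
  · rw [sUnion_range]


theorem baireSpace_of_homeomorph {X Y : Type*} [TopologicalSpace X] [TopologicalSpace Y]
    (e : X ≃ₜ Y) (hX : BaireSpace X) : BaireSpace Y := by
  constructor
  intro f hop hdn
  have h1 : ∀ n, IsOpen (e ⁻¹' f n) := fun n => (hop n).preimage e.continuous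
  have h2 : ∀ n, Dense (e ⁻¹' f n) := fun n => (hdn n).preimage e.isOpenMap
  have h3 : Dense (⋂ n, e ⁻¹' f n) := hX.baire_property _ h1 h2
  have h4 : Dense (e '' ⋂ n, e ⁻¹' f n) :=
    e.surjective.denseRange.dense_image e.continuous h3
  rwa [← preimage_iInter, image_preimage_eq _ e.surjective] at h4

/-- `ℕ → Z` is homeomorphic to the subset `{x : Cc | ∀ n, x n ∈ Z}` of `Cc`. -/
def piHomeo (Z : Set Cs) : (ℕ → Z) ≃ₜ ({x : Cc | ∀ n, x n ∈ Z} : Set Cc) where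
  toFun f := ⟨fun n => (f n : Cs), fun n => (f n).2⟩
  invFun x := fun n => ⟨x.1 n, x.2 n⟩
  left_inv f := rfl
  right_inv x := rfl
  continuous_toFun := by
    apply Continuous.subtype_mk
    exact continuous_pi fun n => continuous_subtype_val.comp (continuous_apply n)
  continuous_invFun := by
    apply continuous_pi
    intro n
    exact Continuous.subtype_mk ((continuous_apply n).comp continuous_subtype_val) _

end NMCB

/-- If `Z ⊆ 2^ω` is nowhere meager in the Cantor space, then `Z` is dense,
`Z` is a Baire space, and `Z^ω` is a Baire space. -/
theorem nowhereMeagre_cantor_baire_power (Z : Set (ℕ → Bool))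
    (h : ∀ U : Set (ℕ → Bool), IsOpen U → U.Nonempty → ¬ IsMeagre (Z ∩ U)) :
    Dense Z ∧ BaireSpace Z ∧ BaireSpace (ℕ → Z) := by
  refine ⟨NMCB.dense_of_nowhereMeagre h, NMCB.baire_of_nowhereMeagre h, ?_⟩
  have hS : BaireSpace ({x : NMCB.Cc | ∀ n, x n ∈ Z} : Set NMCB.Cc) :=
    NMCB.baire_of_nowhereMeagre (NMCB.prod_nowhereMeagre h)
  exact NMCB.baireSpace_of_homeomorph (NMCB.piHomeo Z).symm hS
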